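/- For every family 𝓑 of Borel subsets of 2^ℕ whose union is a free ultrafilter on ℕ, the least cardinality of a family of Lebesgue-null subsets of ℝ covering ℝ is at most the cardinality of 𝓑 (i.e. cov(null) ≤ 𝔲_B). -/

import Mathlib

open Cardinal

/-- Identify `x : ℕ → Bool` with the subset `{n | x n = true}` of `ℕ`. -/
def toSet (x : ℕ → Bool) : Set ℕ := {n | x n = true}

/-- A free ultrafilter is one containing all cofinite sets. -/
def IsFree (U : Ultrafilter ℕ) : Prop := ∀ s : Set ℕ, s.Finite → sᶜ ∈ U

/-- `cov(null)`: the least cardinality of a family of Lebesgue-null subsets of `ℝ`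
covering `ℝ`. -/
noncomputable def covNull : Cardinal :=
  sInf {c : Cardinal | ∃ 𝓝 : Set (Set ℝ),
    (∀ A ∈ 𝓝, MeasureTheory.volume A = 0) ∧ ⋃₀ 𝓝 = Set.univ ∧ c = #𝓝}

open MeasureTheory Set
open scoped ENNReal

namespace CovNullAux

/-- the `i`-th binary digit of the fractional part of `r`. -/
noncomputable def digit (i : ℕ) (r : ℝ) : Bool :=
  decide (⌊(2:ℝ)^(i+1) * Int.fract r⌋ % 2 = 1)

/-- the binary digit map `ℝ → 2^ℕ`. -/
noncomputable def dmap (r : ℝ) : ℕ → Bool := fun i => digit i r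

/-- level-`n` cylinder. -/
def Cyl (n : ℕ) (w : ℕ → Bool) : Set (ℕ → Bool) := {x | ∀ i < n, x i = w i}

def cylSet : Set (Set (ℕ → Bool)) := {C | ∃ n w, C = Cyl n w}

lemma measurable_digit (i : ℕ) : Measurable (digit i) := by
  have h1 : Measurable fun r : ℝ => ⌊(2:ℝ)^(i+1) * Int.fract r⌋ :=
    (measurable_const.mul measurable_fract).floor
  exact (Measurable.of_discrete (f := fun z : ℤ => decide (z % 2 = 1))).comp h1

lemma measurable_dmap : Measurable dmap :=
  measurable_pi_lambda _ fun i => measurable_digit i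

lemma measurableSet_Cyl (n : ℕ) (w : ℕ → Bool) : MeasurableSet (Cyl n w) := by
  have : Cyl n w = ⋂ i ∈ Finset.range n, {x : ℕ → Bool | x i = w i} := by
    ext x; simp [Cyl]
  rw [this]
  refine MeasurableSet.biInter (Finset.range n).countable_toSet fun i _ => ?_
  have : {x : ℕ → Bool | x i = w i} = (fun f : ℕ → Bool => f i) ⁻¹' {w i} := rfl
  rw [this]
  exact measurable_pi_apply i (MeasurableSet.singleton (w i))

lemma cyl_congr {n : ℕ} {w w' : ℕ → Bool} (h : ∀ i < n, w i = w' i) : Cyl n w = Cyl n w' := by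
  ext x; constructor <;> intro hx i hi
  · rw [hx i hi, h i hi]
  · rw [hx i hi, h i hi]

lemma isPiSystem_cylSet : IsPiSystem cylSet := by
  rintro _ ⟨n, w, rfl⟩ _ ⟨m, v, rfl⟩ ⟨x, hxw, hxv⟩
  refine ⟨max n m, fun i => if i < n then w i else v i, ?_⟩
  ext y
  constructor
  · rintro ⟨hy1, hy2⟩ i hi
    by_cases h : i < n
    · simp only []
      simp [h, hy1 i h]
    · have h2 : i < m := by omega
      simp only []
      simp [h, hy2 i h2]
  · intro hy
    constructor
    · intro i hi
      have := hy i (by omega)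
      simp only [] at this
      simpa [hi] using this
    · intro i hi
      have := hy i (by omega)
      simp only [] at this
      by_cases h : i < n
      · rw [this, if_pos h, ← hxw i h, hxv i hi]
      · rwa [if_neg h] at this

lemma pi_eq_generateFrom :
    (inferInstance : MeasurableSpace (ℕ → Bool)) = MeasurableSpace.generateFrom cylSet := by
  apply le_antisymm
  · -- pi ≤ generateFrom
    have heval : ∀ (i : ℕ) (b : Bool),
        MeasurableSet[MeasurableSpace.generateFrom cylSet] {x : ℕ → Bool | x i = b} := by
      intro i b
      have : {x : ℕ → Bool | x i = b} =
          ⋃ (v : Fin (i+1) → Bool) (_ : v ⟨i, Nat.lt_succ_self i⟩ = b),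
            Cyl (i+1) (fun j => if h : j < i + 1 then v ⟨j, h⟩ else false) := by
        ext x
        simp only [mem_setOf_eq, mem_iUnion]
        constructor
        · intro hx
          refine ⟨fun j => x j, hx, fun j hj => ?_⟩
          simp [hj]
        · rintro ⟨v, hv, hx⟩
          have := hx i (Nat.lt_succ_self i)
          simp only [Nat.lt_succ_self, dif_pos] at this
          rw [this, hv]
      rw [this]
      exact MeasurableSet.iUnion fun v => MeasurableSet.iUnion fun _ =>
        MeasurableSpace.measurableSet_generateFrom ⟨_, _, rfl⟩
    rw [show (inferInstance : MeasurableSpace (ℕ → Bool)) = MeasurableSpace.pi from rfl]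
    refine iSup_le fun i => ?_
    rw [MeasurableSpace.comap_le_iff_le_map]
    intro s _
    -- s : Set Bool; preimage measurable
    have hs : (fun x : ℕ → Bool => x i) ⁻¹' s = ⋃ b ∈ s, {x : ℕ → Bool | x i = b} := by
      ext x; simp [eq_comm]
    rw [MeasurableSpace.map_def, hs]
    exact MeasurableSet.biUnion s.to_countable fun b _ => heval i b
  · refine MeasurableSpace.generateFrom_le ?_
    rintro _ ⟨n, w, rfl⟩
    exact measurableSet_Cyl n w


lemma mem_T_iff (N k : ℕ) (r : ℝ) :
    r ∈ Ico ((k:ℝ)/2^N) (((k:ℝ)+1)/2^N) ↔ ⌊(2:ℝ)^N * r⌋ = (k:ℤ) := by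
  have h : (0:ℝ) < 2^N := by positivity
  rw [Set.mem_Ico, Int.floor_eq_iff, div_le_iff₀ h, lt_div_iff₀ h]
  push_cast
  constructor <;> rintro ⟨h1, h2⟩ <;> constructor <;> nlinarith

lemma cyl_interval (n : ℕ) (w : ℕ → Bool) :
    ∃ k : ℕ, k < 2^n ∧
      ∀ r ∈ Ico (0:ℝ) 1, ((∀ i < n, digit i r = w i) ↔ ⌊(2:ℝ)^n * r⌋ = (k:ℤ)) := by
  induction n with
  | zero =>
    refine ⟨0, by norm_num, fun r hr => ?_⟩
    simp only [Nat.not_lt_zero, pow_zero, one_mul, Nat.cast_zero]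
    rw [Int.floor_eq_iff]
    push_cast
    simp only [Set.mem_Ico] at hr
    constructor
    · intro _; exact ⟨hr.1, by linarith [hr.2]⟩
    · intro _ i hi; exact hi.elim
  | succ n ih =>
    obtain ⟨k, hk, hiff⟩ := ih
    have hp2 : (2:ℕ)^(n+1) = 2^n * 2 := pow_succ 2 n
    have hbnat : (w n).toNat ≤ 1 := by cases w n <;> simp
    refine ⟨2*k + (w n).toNat, ?_, fun r hr => ?_⟩
    · have hg : ∀ K : ℕ, k < K → (w n).toNat ≤ 1 → 2*k + (w n).toNat < K * 2 := by
        intro K h1 h2; omega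
      rw [hp2]; exact hg _ hk hbnat
    have hfr : Int.fract r = r := Int.fract_eq_self.2 ⟨hr.1, hr.2⟩
    have hdig : digit n r = decide (⌊(2:ℝ)^(n+1) * r⌋ % 2 = 1) := by rw [digit, hfr]
    have ha : (2:ℝ)^(n+1) * r = 2 * (2^n * r) := by ring
    constructor
    · intro h
      have h1 : ⌊(2:ℝ)^n * r⌋ = (k:ℤ) := (hiff r hr).1 fun i hi => h i (Nat.lt_succ_of_lt hi)
      have hb1 : ((k:ℝ)) ≤ 2^n * r := by
        have := Int.floor_le ((2:ℝ)^n * r); rw [h1] at this; exact_mod_cast this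
      have hb2 : (2:ℝ)^n * r < (k:ℝ) + 1 := by
        have := Int.lt_floor_add_one ((2:ℝ)^n * r); rw [h1] at this; exact_mod_cast this
      have hm1 : (2*(k:ℤ)) ≤ ⌊(2:ℝ)^(n+1) * r⌋ := by
        apply Int.le_floor.2; rw [ha]; push_cast; linarith
      have hm2 : ⌊(2:ℝ)^(n+1) * r⌋ < 2*(k:ℤ) + 2 := by
        apply Int.floor_lt.2; rw [ha]; push_cast; linarith
      have h2 := h n (Nat.lt_succ_self n)
      rw [hdig] at h2
      cases hw : w n <;> rw [hw] at h2
      · rw [decide_eq_false_iff_not] at h2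
        simp only [Bool.toNat_false]
        push_cast
        omega
      · rw [decide_eq_true_eq] at h2
        simp only [Bool.toNat_true]
        push_cast
        omega
    · intro h
      have hm1 : ((2*k + (w n).toNat : ℕ) : ℝ) ≤ 2^(n+1) * r := by
        have := Int.floor_le ((2:ℝ)^(n+1) * r); rw [h] at this; exact_mod_cast this
      have hm2 : (2:ℝ)^(n+1) * r < ((2*k + (w n).toNat : ℕ) : ℝ) + 1 := by
        have := Int.lt_floor_add_one ((2:ℝ)^(n+1) * r); rw [h] at this; exact_mod_cast this
      have hb : ((w n).toNat : ℝ) ≤ 1 := by exact_mod_cast hbnat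
      have hb0 : (0:ℝ) ≤ ((w n).toNat : ℝ) := by positivity
      rw [ha] at hm1 hm2
      push_cast at hm1 hm2
      have h1 : ⌊(2:ℝ)^n * r⌋ = (k:ℤ) := by
        rw [Int.floor_eq_iff]
        push_cast
        constructor <;> linarith
      intro i hi
      rcases Nat.lt_succ_iff_lt_or_eq.1 hi with hi' | hieq
      · exact ((hiff r hr).2 h1) i hi'
      · rw [hieq, hdig, h]
        cases hw : w n
        · simp only [Bool.toNat_false, decide_eq_false_iff_not]
          push_cast
          omega
        · simp only [Bool.toNat_true, decide_eq_true_eq]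
          push_cast
          omega

/-- the digit image measure on `2^ℕ`. -/
noncomputable def ν : Measure (ℕ → Bool) := (volume.restrict (Ico (0:ℝ) 1)).map dmap

instance : IsProbabilityMeasure ν := by
  have h1 : IsProbabilityMeasure (volume.restrict (Ico (0:ℝ) 1)) := by
    constructor
    rw [Measure.restrict_apply_univ, Real.volume_Ico]
    norm_num
  exact Measure.isProbabilityMeasure_map measurable_dmap.aemeasurable

lemma ν_cyl (n : ℕ) (w : ℕ → Bool) : ν (Cyl n w) = ((2:ℝ≥0∞)^n)⁻¹ := by
  obtain ⟨k, hk, hiff⟩ := cyl_interval n w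
  rw [ν, Measure.map_apply measurable_dmap (measurableSet_Cyl n w),
    Measure.restrict_apply (measurable_dmap (measurableSet_Cyl n w))]
  have hIco : dmap ⁻¹' Cyl n w ∩ Ico 0 1 = Ico ((k:ℝ)/2^n) (((k:ℝ)+1)/2^n) := by
    ext r
    constructor
    · rintro ⟨hc, hr⟩
      rw [mem_T_iff]
      exact (hiff r hr).1 hc
    · intro hT
      have hpos : (0:ℝ) < 2^n := by positivity
      have hr : r ∈ Ico (0:ℝ) 1 := by
        rcases hT with ⟨hT1, hT2⟩
        constructor
        · have : (0:ℝ) ≤ (k:ℝ)/2^n := by positivity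
          linarith
        · have hk1 : ((k:ℝ)+1)/2^n ≤ 1 := by
            rw [div_le_one hpos]
            have : (k:ℝ) + 1 ≤ (2^n : ℕ) := by exact_mod_cast hk
            push_cast at this ⊢
            linarith
          linarith
      exact ⟨(hiff r hr).2 ((mem_T_iff n k r).1 hT), hr⟩
  rw [hIco, Real.volume_Ico]
  have harith : ((k:ℝ)+1)/2^n - (k:ℝ)/2^n = ((2:ℝ)^n)⁻¹ := by
    field_simp
    ring
  rw [harith, ENNReal.ofReal_inv_of_pos (by positivity),
    ENNReal.ofReal_pow (by norm_num : (0:ℝ) ≤ 2)]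
  norm_num


/-- flip the coordinates indicated by the mask `m`. -/
def flipm (m : ℕ → Bool) (x : ℕ → Bool) : ℕ → Bool := fun i => xor (m i) (x i)

lemma measurable_flipm (m : ℕ → Bool) : Measurable (flipm m) :=
  measurable_pi_lambda _ fun i =>
    (Measurable.of_discrete (f := fun b => xor (m i) b)).comp (measurable_pi_apply i)

lemma flipm_invol (m : ℕ → Bool) (x : ℕ → Bool) : flipm m (flipm m x) = x := by
  funext i
  simp [flipm]

lemma flipm_preimage_cyl (m : ℕ → Bool) (n : ℕ) (w : ℕ → Bool) :
    flipm m ⁻¹' Cyl n w = Cyl n (fun i => xor (m i) (w i)) := by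
  have hB : ∀ a b c : Bool, (xor a b = c) ↔ b = xor a c := by decide
  ext x
  constructor <;> intro hx i hi
  · exact (hB _ _ _).1 (hx i hi)
  · exact (hB _ _ _).2 (hx i hi)

lemma measure_ext_cyl {μ₁ μ₂ : Measure (ℕ → Bool)} [IsFiniteMeasure μ₁]
    (h : ∀ n w, μ₁ (Cyl n w) = μ₂ (Cyl n w)) (huniv : μ₁ univ = μ₂ univ) : μ₁ = μ₂ := by
  refine ext_of_generate_finite cylSet pi_eq_generateFrom isPiSystem_cylSet ?_ huniv
  rintro _ ⟨n, w, rfl⟩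
  exact h n w

lemma map_flipm (m : ℕ → Bool) : ν.map (flipm m) = ν := by
  have : IsProbabilityMeasure (ν.map (flipm m)) :=
    Measure.isProbabilityMeasure_map (measurable_flipm m).aemeasurable
  refine measure_ext_cyl (fun n w => ?_) (by simp)
  rw [Measure.map_apply (measurable_flipm m) (measurableSet_Cyl n w), flipm_preimage_cyl,
    ν_cyl, ν_cyl]

lemma ν_flip_apply (m : ℕ → Bool) {A : Set (ℕ → Bool)} (hA : MeasurableSet A) :
    ν (flipm m ⁻¹' A) = ν A := by
  conv_rhs => rw [← map_flipm m]
  rw [Measure.map_apply (measurable_flipm m) hA]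

/-- extend `v : Fin n → Bool` by `false`. -/
def extv (n : ℕ) (v : Fin n → Bool) : ℕ → Bool := fun i => if h : i < n then v ⟨i, h⟩ else false

lemma iUnion_cyl_extv (n : ℕ) : ⋃ v : Fin n → Bool, Cyl n (extv n v) = Set.univ := by
  refine Set.eq_univ_of_forall fun x => mem_iUnion.2 ⟨fun i => x i, fun i hi => ?_⟩
  simp [extv, hi]

lemma pairwise_disjoint_cyl_extv (n : ℕ) :
    Pairwise fun v v' : Fin n → Bool => Disjoint (Cyl n (extv n v)) (Cyl n (extv n v')) := by
  intro v v' hvv'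
  rw [Set.disjoint_left]
  intro x hx hx'
  apply hvv'
  funext i
  have h1 := hx i i.isLt
  have h2 := hx' i i.isLt
  rw [h1] at h2
  simpa [extv, i.isLt] using h2

/-- A measurable set invariant under all finite flips has measure zero or one. -/
lemma zero_one {A : Set (ℕ → Bool)} (hA : MeasurableSet A)
    (hinv : ∀ m : ℕ → Bool, {i | m i = true}.Finite → flipm m ⁻¹' A = A) :
    ν A = 0 ∨ ν A = 1 := by
  have key : ∀ n (w : ℕ → Bool), ν (Cyl n w ∩ A) = ((2:ℝ≥0∞)^n)⁻¹ * ν A := by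
    intro n w
    -- all level-n cylinders give the same trace measure
    have same : ∀ w' : ℕ → Bool, ν (Cyl n w' ∩ A) = ν (Cyl n w ∩ A) := by
      intro w'
      set m : ℕ → Bool := fun i => if i < n then xor (w' i) (w i) else false with hm
      have hfin : {i | m i = true}.Finite := by
        apply (finite_Iio n).subset
        intro i hi
        simp only [hm, mem_setOf_eq] at hi
        by_contra hcon
        simp only [mem_Iio, not_lt] at hcon
        rw [if_neg (by omega)] at hi
        exact Bool.false_ne_true hi
      have hpre : flipm m ⁻¹' (Cyl n w ∩ A) = Cyl n w' ∩ A := by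
        rw [preimage_inter, hinv m hfin, flipm_preimage_cyl]
        congr 1
        apply cyl_congr
        intro i hi
        simp only [hm, if_pos hi]
        cases w' i <;> cases w i <;> rfl
      rw [← hpre, ν_flip_apply m ((measurableSet_Cyl n w).inter hA)]
    -- sum over a partition
    have hsum : ν A = (2^n : ℕ) * ν (Cyl n w ∩ A) := by
      have hA' : A = ⋃ v : Fin n → Bool, Cyl n (extv n v) ∩ A := by
        rw [← iUnion_inter, iUnion_cyl_extv, Set.univ_inter]
      have hdisj : Pairwise (Function.onFun Disjoint fun v : Fin n → Bool => Cyl n (extv n v) ∩ A) :=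
        fun v v' h =>
          Disjoint.mono inter_subset_left inter_subset_left (pairwise_disjoint_cyl_extv n h)
      calc ν A = ν (⋃ v : Fin n → Bool, Cyl n (extv n v) ∩ A) := by rw [← hA']
        _ = ∑' v : Fin n → Bool, ν (Cyl n (extv n v) ∩ A) :=
            measure_iUnion hdisj fun v => (measurableSet_Cyl n _).inter hA
        _ = ∑' _v : Fin n → Bool, ν (Cyl n w ∩ A) := by
            congr 1; funext v; exact same (extv n v)
        _ = (Fintype.card (Fin n → Bool) : ℝ≥0∞) * ν (Cyl n w ∩ A) := by
            rw [tsum_fintype, Finset.sum_const, Finset.card_univ, nsmul_eq_mul]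
        _ = (2^n : ℕ) * ν (Cyl n w ∩ A) := by
            congr 2
            simp [Fintype.card_fun]
    have h2n : ((2:ℝ≥0∞)^n) ≠ 0 := by positivity
    have h2t : ((2:ℝ≥0∞)^n) ≠ ⊤ := by
      exact ENNReal.pow_ne_top (by norm_num)
    rw [hsum]
    push_cast
    rw [← mul_assoc, ENNReal.inv_mul_cancel h2n h2t, one_mul]
  -- restriction equals scaled measure
  have hres : ν.restrict A = ν A • ν := by
    refine measure_ext_cyl (fun n w => ?_) ?_
    · rw [Measure.restrict_apply (measurableSet_Cyl n w), Measure.smul_apply, smul_eq_mul,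
        key n w, ν_cyl, mul_comm]
    · rw [Measure.restrict_apply_univ, Measure.smul_apply, smul_eq_mul, measure_univ, mul_one]
  have hAA : ν A = ν A * ν A := by
    have h1 : ν.restrict A A = ν A := by
      rw [Measure.restrict_apply hA, inter_self]
    have h2 : (ν A • ν) A = ν A * ν A := by
      rw [Measure.smul_apply, smul_eq_mul]
    conv_lhs => rw [← h1, hres]
    exact h2
  rcases eq_or_ne (ν A) 0 with h | h
  · exact Or.inl h
  · right
    have hne : ν A ≠ ⊤ := measure_ne_top ν A
    exact ((ENNReal.mul_right_inj h hne).1 (by rw [mul_one, ← hAA])).symm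


def maskOf (s : Finset ℕ) : ℕ → Bool := fun i => decide (i ∈ s)

lemma finite_support_maskOf (s : Finset ℕ) : {i | maskOf s i = true}.Finite := by
  apply s.finite_toSet.subset
  intro i hi
  simpa [maskOf] using hi

lemma exists_maskOf {m : ℕ → Bool} (h : {i | m i = true}.Finite) : ∃ s : Finset ℕ, maskOf s = m := by
  refine ⟨h.toFinset, ?_⟩
  funext i
  rcases hm : m i with _ | _ <;> simp [maskOf, Set.Finite.mem_toFinset, hm]

/-- Any measurable subset of a finite-flip invariant set `W` which is disjoint from its
global flip is `ν`-null. -/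
lemma small {W : Set (ℕ → Bool)}
    (hWinv : ∀ m : ℕ → Bool, {i | m i = true}.Finite → flipm m ⁻¹' W = W)
    (hWσ : flipm (fun _ => true) ⁻¹' W ∩ W = ∅)
    {B : Set (ℕ → Bool)} (hB : MeasurableSet B) (hBW : B ⊆ W) : ν B = 0 := by
  classical
  set B' : Set (ℕ → Bool) := ⋃ s : Finset ℕ, flipm (maskOf s) ⁻¹' B with hB'
  have hB'meas : MeasurableSet B' := MeasurableSet.iUnion fun s => (measurable_flipm _) hB
  have hBB' : B ⊆ B' := by
    intro x hx
    refine mem_iUnion.2 ⟨∅, ?_⟩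
    have : flipm (maskOf ∅) x = x := by
      funext i; simp [flipm, maskOf]
    simpa [Set.mem_preimage, this] using hx
  have hB'W : B' ⊆ W := by
    refine iUnion_subset fun s => ?_
    rw [← hWinv (maskOf s) (finite_support_maskOf s)]
    exact preimage_mono hBW
  have hsub : ∀ m : ℕ → Bool, {i | m i = true}.Finite → flipm m ⁻¹' B' ⊆ B' := by
    intro m hm
    rw [hB', preimage_iUnion]
    refine iUnion_subset fun s => ?_
    have hcomp : flipm m ⁻¹' (flipm (maskOf s) ⁻¹' B) =
        flipm (fun i => xor (m i) (maskOf s i)) ⁻¹' B := by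
      rw [← Set.preimage_comp]
      have : flipm (maskOf s) ∘ flipm m = flipm (fun i => xor (m i) (maskOf s i)) := by
        funext x
        funext i
        simp only [Function.comp_apply, flipm]
        cases m i <;> cases maskOf s i <;> cases x i <;> rfl
      rw [this]
    rw [hcomp]
    have hfin : {i | (fun i => xor (m i) (maskOf s i)) i = true}.Finite := by
      apply (hm.union (finite_support_maskOf s)).subset
      intro i hi
      simp only [mem_setOf_eq] at hi
      by_contra hcon
      simp only [Set.mem_union, mem_setOf_eq, not_or, Bool.not_eq_true] at hcon
      rw [hcon.1, hcon.2] at hi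
      exact Bool.false_ne_true hi
    obtain ⟨t, ht⟩ := exists_maskOf hfin
    rw [← ht]
    exact subset_iUnion (fun u : Finset ℕ => flipm (maskOf u) ⁻¹' B) t
  have hB'inv : ∀ m : ℕ → Bool, {i | m i = true}.Finite → flipm m ⁻¹' B' = B' := by
    intro m hm
    refine subset_antisymm (hsub m hm) ?_
    have h1 : B' = flipm m ⁻¹' (flipm m ⁻¹' B') := by
      ext x
      simp [Set.mem_preimage, flipm_invol]
    intro x hx
    rw [h1] at hx
    exact Set.mem_preimage.2 (hsub m hm hx)
  rcases zero_one hB'meas hB'inv with h0 | h1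
  · exact le_antisymm (h0 ▸ measure_mono hBB') zero_le
  · exfalso
    have hdisj : Disjoint (flipm (fun _ => true) ⁻¹' B') B' := by
      rw [Set.disjoint_iff_inter_eq_empty]
      apply Set.eq_empty_of_subset_empty
      rw [← hWσ]
      exact inter_subset_inter (preimage_mono hB'W) hB'W
    have hσ : ν (flipm (fun _ => true) ⁻¹' B') = 1 := by
      rw [ν_flip_apply _ hB'meas, h1]
    have htwo : (2:ℝ≥0∞) ≤ 1 := by
      calc (2:ℝ≥0∞) = ν (flipm (fun _ => true) ⁻¹' B') + ν B' := by rw [hσ, h1]; norm_num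
        _ = ν (flipm (fun _ => true) ⁻¹' B' ∪ B') :=
            (measure_union hdisj hB'meas).symm
        _ ≤ 1 := prob_le_one
    norm_num at htwo

lemma vol_preimage {A : Set (ℕ → Bool)} (hA : MeasurableSet A) (h0 : ν A = 0) :
    volume (dmap ⁻¹' A) = 0 := by
  have hper : ∀ (k : ℤ) (r : ℝ), dmap (r + k) = dmap r := by
    intro k r
    funext i
    simp [dmap, digit, Int.fract_add_intCast]
  have hsplit : dmap ⁻¹' A ⊆ ⋃ k : ℤ, dmap ⁻¹' A ∩ Ico (k:ℝ) ((k:ℝ)+1) := by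
    intro r hr
    refine mem_iUnion.2 ⟨⌊r⌋, hr, Int.floor_le r, ?_⟩
    exact_mod_cast Int.lt_floor_add_one r
  refine measure_mono_null hsplit (measure_iUnion_null fun k => ?_)
  have h1 : volume (dmap ⁻¹' A ∩ Ico (0:ℝ) 1) = 0 := by
    have h2 : ν A = volume (dmap ⁻¹' A ∩ Ico (0:ℝ) 1) := by
      rw [ν, Measure.map_apply measurable_dmap hA, Measure.restrict_apply (measurable_dmap hA)]
    rw [← h2, h0]
  have hshift : (fun r : ℝ => r + (k:ℝ)) ⁻¹' (dmap ⁻¹' A ∩ Ico (k:ℝ) ((k:ℝ)+1)) =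
      dmap ⁻¹' A ∩ Ico (0:ℝ) 1 := by
    ext r
    simp only [Set.mem_preimage, Set.mem_inter_iff, Set.mem_Ico]
    constructor
    · rintro ⟨hm, h2, h3⟩
      rw [hper k r] at hm
      exact ⟨hm, by linarith, by linarith⟩
    · rintro ⟨hm, h2, h3⟩
      exact ⟨by rw [hper k r]; exact hm, by linarith, by linarith⟩
  calc volume (dmap ⁻¹' A ∩ Ico (k:ℝ) ((k:ℝ)+1))
      = volume ((fun r : ℝ => r + (k:ℝ)) ⁻¹' (dmap ⁻¹' A ∩ Ico (k:ℝ) ((k:ℝ)+1))) :=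
        (measure_preimage_add_right volume _ _).symm
    _ = 0 := by rw [hshift]; exact h1

lemma toSet_injective : Function.Injective toSet := by
  intro x y h
  funext i
  have h2 : (i ∈ toSet x) = (i ∈ toSet y) := by rw [h]
  simp only [toSet, mem_setOf_eq, eq_iff_iff] at h2
  cases hx : x i <;> cases hy : y i <;> simp_all

lemma toSet_flip_top (x : ℕ → Bool) : toSet (flipm (fun _ => true) x) = (toSet x)ᶜ := by
  ext i
  simp [toSet, flipm]

lemma memU_congr (U : Ultrafilter ℕ) (hfree : IsFree U) {D : Set ℕ} (hD : D.Finite)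
    {s t : Set ℕ} (h : ∀ i ∉ D, (i ∈ s ↔ i ∈ t)) : s ∈ U ↔ t ∈ U := by
  have haux : ∀ s t : Set ℕ, (∀ i ∉ D, (i ∈ s ↔ i ∈ t)) → s ∈ U → t ∈ U := by
    intro s t hst hs
    have h1 : s ∩ Dᶜ ∈ U := by
      rw [← Ultrafilter.mem_coe] at hs ⊢
      exact Filter.inter_mem hs (hfree D hD)
    refine Filter.mem_of_superset h1 ?_
    rintro i ⟨hi1, hi2⟩
    exact (hst i hi2).1 hi1
  exact ⟨haux s t h, haux t s (fun i hi => (h i hi).symm)⟩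

lemma toSet_flipm_congr (m : ℕ → Bool) (x : ℕ → Bool) (i : ℕ) (h : m i = false) :
    (i ∈ toSet (flipm m x) ↔ i ∈ toSet x) := by
  simp [toSet, flipm, h]

end CovNullAux

open CovNullAux

theorem covNull_le_uB (𝓑 : Set (Set (ℕ → Bool))) (hBorel : ∀ B ∈ 𝓑, MeasurableSet B)
    (U : Ultrafilter ℕ) (hfree : IsFree U)
    (hunion : toSet '' ⋃₀ 𝓑 = {s : Set ℕ | s ∈ U}) :
    covNull ≤ #𝓑 := by
  classical
  have hchar : ∀ x : ℕ → Bool, x ∈ ⋃₀ 𝓑 ↔ toSet x ∈ U := by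
    intro x
    constructor
    · intro hx
      have h1 : toSet x ∈ toSet '' ⋃₀ 𝓑 := Set.mem_image_of_mem _ hx
      rw [hunion] at h1
      exact h1
    · intro hx
      have h1 : toSet x ∈ toSet '' ⋃₀ 𝓑 := by rw [hunion]; exact hx
      obtain ⟨y, hy, hxy⟩ := h1
      rwa [toSet_injective hxy] at hy
  -- invariance of the union under finite flips
  have hUinv : ∀ m : ℕ → Bool, {i | m i = true}.Finite → flipm m ⁻¹' ⋃₀ 𝓑 = ⋃₀ 𝓑 := by
    intro m hm
    ext x
    rw [Set.mem_preimage, hchar, hchar]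
    refine memU_congr U hfree hm fun i hi => ?_
    refine toSet_flipm_congr m x i ?_
    simpa using hi
  have hUcinv : ∀ m : ℕ → Bool, {i | m i = true}.Finite →
      flipm m ⁻¹' (⋃₀ 𝓑)ᶜ = (⋃₀ 𝓑)ᶜ := by
    intro m hm
    rw [Set.preimage_compl, hUinv m hm]
  have hUσ : flipm (fun _ => true) ⁻¹' ⋃₀ 𝓑 ∩ ⋃₀ 𝓑 = ∅ := by
    apply Set.eq_empty_of_forall_notMem
    rintro x ⟨h1, h2⟩
    rw [Set.mem_preimage, hchar, toSet_flip_top] at h1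
    rw [hchar] at h2
    exact (Ultrafilter.compl_mem_iff_notMem.1 h1) h2
  have hUcσ : flipm (fun _ => true) ⁻¹' (⋃₀ 𝓑)ᶜ ∩ (⋃₀ 𝓑)ᶜ = ∅ := by
    apply Set.eq_empty_of_forall_notMem
    rintro x ⟨h1, h2⟩
    rw [Set.mem_preimage, Set.mem_compl_iff, hchar, toSet_flip_top] at h1
    rw [Set.mem_compl_iff, hchar] at h2
    rcases U.mem_or_compl_mem (toSet x) with h | h
    · exact h2 h
    · exact h1 h
  -- the covering family
  set F : Set (ℕ → Bool) → Set ℝ :=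
    fun B => dmap ⁻¹' B ∪ dmap ⁻¹' (flipm (fun _ => true) ⁻¹' B) with hF
  have hnull : ∀ A ∈ F '' 𝓑, volume A = 0 := by
    rintro _ ⟨B, hB, rfl⟩
    have hBmeas := hBorel B hB
    have h1 : ν B = 0 :=
      small hUinv hUσ hBmeas (Set.subset_sUnion_of_mem hB)
    have hσBsub : flipm (fun _ => true) ⁻¹' B ⊆ (⋃₀ 𝓑)ᶜ := by
      intro x hx
      intro hx2
      have : x ∈ flipm (fun _ => true) ⁻¹' ⋃₀ 𝓑 ∩ ⋃₀ 𝓑 :=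
        ⟨Set.preimage_mono (Set.subset_sUnion_of_mem hB) hx, hx2⟩
      rw [hUσ] at this
      exact this
    have h2 : ν (flipm (fun _ => true) ⁻¹' B) = 0 :=
      small hUcinv hUcσ ((measurable_flipm _) hBmeas) hσBsub
    exact measure_union_null (vol_preimage hBmeas h1)
      (vol_preimage ((measurable_flipm _) hBmeas) h2)
  have hcov : ⋃₀ (F '' 𝓑) = Set.univ := by
    apply Set.eq_univ_of_forall
    intro r
    rw [Set.mem_sUnion]
    by_cases h : toSet (dmap r) ∈ U
    · obtain ⟨B, hB, hmem⟩ := Set.mem_sUnion.1 ((hchar (dmap r)).2 h)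
      exact ⟨F B, ⟨B, hB, rfl⟩, Or.inl hmem⟩
    · have h2 : (toSet (dmap r))ᶜ ∈ U := Ultrafilter.compl_mem_iff_notMem.2 h
      have h3 : toSet (flipm (fun _ => true) (dmap r)) ∈ U := by
        rw [toSet_flip_top]; exact h2
      obtain ⟨B, hB, hmem⟩ := Set.mem_sUnion.1 ((hchar _).2 h3)
      exact ⟨F B, ⟨B, hB, rfl⟩, Or.inr hmem⟩
  have hmem : #(F '' 𝓑) ∈ {c : Cardinal | ∃ 𝓝 : Set (Set ℝ),
      (∀ A ∈ 𝓝, MeasureTheory.volume A = 0) ∧ ⋃₀ 𝓝 = Set.univ ∧ c = #𝓝} :=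
    ⟨F '' 𝓑, hnull, hcov, rfl⟩
  exact le_trans (csInf_le' hmem) Cardinal.mk_image_le
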